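/- Let G be a graph, M a K_t model in G, and X a vertex subset of G with |X| ≤ t−2. Then there is a unique block of G − X that intersects every branch set of M not met by X. -/

import Mathlib

open SimpleGraph

/-- The graph obtained from `G` by deleting a set `X` of vertices. -/
def SimpleGraph.deleteSet {V : Type*} (G : SimpleGraph V) (X : Set V) : SimpleGraph V where
  Adj u v := G.Adj u v ∧ u ∉ X ∧ v ∉ X
  symm := ⟨fun u v h => ⟨h.1.symm, h.2.2, h.2.1⟩⟩
  loopless := ⟨fun v h => G.loopless.irrefl v h.1⟩

/-- A model of the complete graph `K t` in a graph `G`. -/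
structure KtModel {V : Type*} (G : SimpleGraph V) (t : ℕ) where
  branch : Fin t → Set V
  nonempty : ∀ i, (branch i).Nonempty
  disjoint : ∀ i j, i ≠ j → Disjoint (branch i) (branch j)
  connected : ∀ i, (G.induce (branch i)).Connected
  me : ∀ i j, i ≠ j → V × V
  me_spec : ∀ i j (hij : i ≠ j),
    (me i j hij).1 ∈ branch i ∧ (me i j hij).2 ∈ branch j ∧
      G.Adj (me i j hij).1 (me i j hij).2

/-- Two edges lie in a common block: they are equal or lie on a common cycle.
The equivalence classes of this relation are the edge sets of the blocks of `H`. -/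
def SameBlock {V : Type*} (H : SimpleGraph V) (e e' : Sym2 V) : Prop :=
  e = e' ∨ ∃ (u : V) (p : H.Walk u u), p.IsCycle ∧ e ∈ p.edges ∧ e' ∈ p.edges

/-- The block (equivalence class) of the edge `e₀` of `H` meets the vertex set `B`. -/
def BlockMeets {V : Type*} (H : SimpleGraph V) (e₀ : Sym2 V) (B : Set V) : Prop :=
  ∃ e ∈ H.edgeSet, SameBlock H e₀ e ∧ ∃ v ∈ e, v ∈ B

section Aux

variable {V : Type*} [DecidableEq V] {H : SimpleGraph V}

open SimpleGraph.Walk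

lemma SameBlock.rfl' {e : Sym2 V} : SameBlock H e e := Or.inl rfl

lemma SameBlock.symm' {e f : Sym2 V} (h : SameBlock H e f) : SameBlock H f e := by
  rcases h with h | ⟨u, p, hp, h1, h2⟩
  · exact Or.inl h.symm
  · exact Or.inr ⟨u, p, hp, h2, h1⟩

/-- If a path starting at `p` contains an edge `s(p,q)`, it starts with it. -/
lemma path_cons_of_edge {p q z : V} (W : H.Walk p z) (hW : W.IsPath)
    (he : s(p, q) ∈ W.edges) : ∃ (h : H.Adj p q) (W' : H.Walk q z), W = Walk.cons h W' := by
  cases W with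
  | nil => simp at he
  | @cons _ c _ h₀ W₀ =>
    rw [Walk.edges_cons, List.mem_cons] at he
    rcases he with he | he
    · have hq : q = c := by
        rcases Sym2.eq_iff.mp he with ⟨_, h2⟩ | ⟨h1, h2⟩
        · exact h2
        · exact absurd h1 h₀.ne
      subst hq
      exact ⟨h₀, W₀, rfl⟩
    · exfalso
      have hmem : p ∈ W₀.support := W₀.fst_mem_support_of_mem_edges he
      have hnd := hW.support_nodup
      rw [Walk.support_cons] at hnd
      exact (List.nodup_cons.mp hnd).1 hmem

/-- Split a cycle at a vertex into two paths. -/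
lemma cycle_split {a y : V} (p : H.Walk a a) (hp : p.IsCycle) (hy : y ∈ p.support)
    (hya : y ≠ a) :
    ∃ (A : H.Walk a y) (B : H.Walk y a), p = A.append B ∧ A.IsPath ∧ B.IsPath ∧
      ∀ v, v ∈ A.support → v ∈ B.support → v = a ∨ v = y := by
  cases p with
  | nil => simp at hy; exact absurd hy hya
  | @cons _ c _ h₀ q =>
    have hq : q.IsPath := Walk.IsPath.mk' (by
      have := hp.support_nodup
      rwa [Walk.support_cons, List.tail_cons] at this)
    have hyq : y ∈ q.support := by
      have h1 : y ∈ (Walk.cons h₀ q).support := hy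
      rw [Walk.support_cons, List.mem_cons] at h1
      rcases h1 with h1 | h1
      · exact absurd h1 hya
      · exact h1
    have hspec : (q.takeUntil y hyq).append (q.dropUntil y hyq) = q := q.take_spec hyq
    have hA'path : (q.takeUntil y hyq).IsPath := hq.takeUntil hyq
    have hBpath : (q.dropUntil y hyq).IsPath := hq.dropUntil hyq
    have hsupp : q.support = (q.takeUntil y hyq).support ++ (q.dropUntil y hyq).support.tail := by
      conv_lhs => rw [← hspec]
      rw [Walk.support_append]
    have hnd : ((q.takeUntil y hyq).support ++ (q.dropUntil y hyq).support.tail).Nodup := by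
      rw [← hsupp]; exact hq.support_nodup
    have hdisj := List.disjoint_of_nodup_append hnd
    have haA' : a ∉ (q.takeUntil y hyq).support := by
      intro haA
      have haB : a ∈ (q.dropUntil y hyq).support.tail := by
        have h2 : a ∈ (q.dropUntil y hyq).support := (q.dropUntil y hyq).end_mem_support
        rw [(q.dropUntil y hyq).support_eq_cons, List.mem_cons] at h2
        rcases h2 with h2 | h2
        · exact absurd h2.symm hya
        · exact h2
      exact hdisj haA haB
    refine ⟨Walk.cons h₀ (q.takeUntil y hyq), q.dropUntil y hyq, ?_, hA'path.cons haA',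
      hBpath, ?_⟩
    · rw [Walk.cons_append, hspec]
    · intro v hvA hvB
      rw [Walk.support_cons, List.mem_cons] at hvA
      rcases hvA with rfl | hvA
      · exact Or.inl rfl
      rw [(q.dropUntil y hyq).support_eq_cons, List.mem_cons] at hvB
      rcases hvB with rfl | hvB
      · exact Or.inr rfl
      · exact absurd hvB (hdisj hvA)

/-- Gluing a path and a returning path with disjoint interiors into a cycle. -/
lemma glue_cycle {a y : V} (hya : y ≠ a) (Q : H.Walk a y) (hQ : Q.IsPath)
    (B : H.Walk y a) (hB : B.IsPath)
    (hedge : ∀ e ∈ Q.edges, e ∉ B.edges)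
    (hsup : ∀ v ∈ Q.support.tail, v ≠ y → v ∉ B.support) :
    (Q.append B).IsCycle := by
  have hQnd : Q.support.Nodup := hQ.support_nodup
  have hBnd : B.support.Nodup := hB.support_nodup
  refine ⟨⟨⟨?_⟩, ?_⟩, ?_⟩
  · rw [Walk.edges_append]
    exact List.Nodup.append hQ.edges_nodup hB.edges_nodup hedge
  · intro hn
    have hl : (Q.append B).length = 0 := by rw [hn]; rfl
    rw [Walk.length_append] at hl
    have hQ0 : Q.length = 0 := by omega
    exact hya (Walk.eq_of_length_eq_zero hQ0).symm
  · rw [Walk.tail_support_append]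
    refine List.Nodup.append ?_ ?_ ?_
    · rw [Q.support_eq_cons] at hQnd
      exact hQnd.of_cons
    · rw [B.support_eq_cons] at hBnd
      exact hBnd.of_cons
    · intro v hvQ hvB
      by_cases hvy : v = y
      · subst hvy
        rw [B.support_eq_cons] at hBnd
        exact (List.nodup_cons.mp hBnd).1 hvB
      · exact hsup v hvQ hvy (List.mem_of_mem_tail hvB)

/-- The ear lemma: all edges of an ear attached to a cycle are in the same block as
the cycle's edges. -/
lemma ear_lemma {a y : V} (C : H.Walk a a) (hC : C.IsCycle) (hy : y ∈ C.support)
    (hya : y ≠ a) (Q : H.Walk a y) (hQ : Q.IsPath)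
    (hQC : ∀ e ∈ Q.edges, e ∉ C.edges)
    (hint : ∀ v ∈ Q.support, v ≠ a → v ≠ y → v ∉ C.support) :
    ∀ h ∈ C.edges, ∀ e ∈ Q.edges, SameBlock H h e := by
  obtain ⟨A, B, hsplit, hApath, hBpath, hAB⟩ := cycle_split C hC hy hya
  intro h hh e he
  have hCedges : C.edges = A.edges ++ B.edges := by rw [hsplit, Walk.edges_append]
  have hCsup : ∀ v, v ∈ A.support ∨ v ∈ B.support → v ∈ C.support := by
    intro v hv
    rw [hsplit, Walk.mem_support_append_iff]
    exact hv
  have haQ : a ∉ Q.support.tail := by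
    have := hQ.support_nodup
    rw [Q.support_eq_cons] at this
    exact (List.nodup_cons.mp this).1
  have hQtail : ∀ v ∈ Q.support.tail, v ≠ y → v ∉ A.support ∧ v ∉ B.support := by
    intro v hv hvy
    have hva : v ≠ a := fun hh' => haQ (hh' ▸ hv)
    have hvC := hint v (List.mem_of_mem_tail hv) hva hvy
    exact ⟨fun hvA => hvC (hCsup v (Or.inl hvA)), fun hvB => hvC (hCsup v (Or.inr hvB))⟩
  rw [hCedges, List.mem_append] at hh
  rcases hh with hh | hh
  · -- h ∈ A.edges : glue Q with A.reverse
    have hZ : (Q.append A.reverse).IsCycle := by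
      apply glue_cycle hya Q hQ A.reverse hApath.reverse
      · intro e' he' hce'
        apply hQC e' he'
        rw [hCedges, List.mem_append]
        left
        rwa [Walk.edges_reverse, List.mem_reverse] at hce'
      · intro v hv hvy hvA
        rw [Walk.support_reverse, List.mem_reverse] at hvA
        exact (hQtail v hv hvy).1 hvA
    refine Or.inr ⟨a, Q.append A.reverse, hZ, ?_, ?_⟩
    · rw [Walk.edges_append, List.mem_append]
      right
      rwa [Walk.edges_reverse, List.mem_reverse]
    · rw [Walk.edges_append, List.mem_append]
      exact Or.inl he
  · -- h ∈ B.edges : glue Q with B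
    have hZ : (Q.append B).IsCycle := by
      apply glue_cycle hya Q hQ B hBpath
      · intro e' he' hce'
        apply hQC e' he'
        rw [hCedges, List.mem_append]
        exact Or.inr hce'
      · intro v hv hvy hvB
        exact (hQtail v hv hvy).2 hvB
    refine Or.inr ⟨a, Q.append B, hZ, ?_, ?_⟩
    · rw [Walk.edges_append, List.mem_append]
      exact Or.inr hh
    · rw [Walk.edges_append, List.mem_append]
      exact Or.inl he

/-- Split a walk at the first vertex (after the start) belonging to `S`. -/
lemma walk_split (S : Set V) :
    ∀ {a b : V} (P : H.Walk a b), b ∈ S → 0 < P.length →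
      ∃ y, y ∈ S ∧ ∃ (Q : H.Walk a y) (R : H.Walk y b), P = Q.append R ∧ 0 < Q.length ∧
        ∀ v ∈ Q.support, v ≠ a → v ≠ y → v ∉ S := by
  intro a b P
  induction P with
  | nil => intro _ h; simp at h
  | @cons u c b h₀ P₀ ih =>
    intro hb _
    by_cases hc : c ∈ S
    · refine ⟨c, hc, Walk.cons h₀ Walk.nil, P₀, by simp, by simp, ?_⟩
      intro v hv hva hvy
      rw [Walk.support_cons, List.mem_cons] at hv
      rcases hv with rfl | hv
      · exact absurd rfl hva
      · rw [Walk.support_nil, List.mem_singleton] at hv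
        exact absurd hv hvy
    · have hlen : 0 < P₀.length := by
        rcases Nat.eq_zero_or_pos P₀.length with h0 | h0
        · have hcb : c = b := Walk.eq_of_length_eq_zero h0
          subst hcb
          exact absurd hb hc
        · exact h0
      obtain ⟨y, hy, Q', R, hsp, hqp, hi⟩ := ih hb hlen
      refine ⟨y, hy, Walk.cons h₀ Q', R, by rw [Walk.cons_append, hsp], by simp, ?_⟩
      intro v hv hva hvy
      rw [Walk.support_cons, List.mem_cons] at hv
      rcases hv with rfl | hv
      · exact absurd rfl hva
      · by_cases hvc : v = c
        · subst hvc; exact hc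
        · exact hi v hv hvc hvy

lemma mem_support_rotate {v u : V} (c : H.Walk v v) (hc : c.IsCycle) (h : u ∈ c.support)
    {x : V} : x ∈ (c.rotate _ h).support ↔ x ∈ c.support := by
  have h1 : ∀ {w : V} (d : H.Walk w w), d ≠ Walk.nil →
      ∀ {z : V}, (z ∈ d.support ↔ z ∈ d.support.tail) := by
    intro w d hd z
    cases d with
    | nil => exact absurd rfl hd
    | cons hadj d' =>
      rw [Walk.support_cons, List.tail_cons, List.mem_cons]
      constructor
      · rintro (rfl | hz)
        · exact d'.end_mem_support
        · exact hz
      · exact Or.inr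
  rw [h1 _ (hc.rotate h).ne_nil, h1 _ hc.ne_nil]
  exact (Walk.support_rotate c _ h).mem_iff

/-- KEY LEMMA: if `a ≠ b` are two vertices of a cycle `C` and `P` is any `a`–`b` path,
then every edge of `P` is in the same block as every edge of `C`. -/
lemma key_lemma {u : V} (C : H.Walk u u) (hC : C.IsCycle) :
    ∀ (n : ℕ) {a b : V} (P : H.Walk a b), P.length ≤ n → P.IsPath →
      a ∈ C.support → b ∈ C.support → a ≠ b →
      ∀ e ∈ P.edges, ∀ h ∈ C.edges, SameBlock H h e := by
  intro n
  induction n with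
  | zero =>
    intro a b P hlen _ _ _ hab e _ h _
    exact absurd (Walk.eq_of_length_eq_zero (Nat.le_zero.mp hlen)) hab
  | succ n ih =>
    intro a b P hlen hP ha hb hab e he h hh
    have hlenpos : 0 < P.length := by
      rcases Nat.eq_zero_or_pos P.length with h0 | h0
      · exact absurd (Walk.eq_of_length_eq_zero h0) hab
      · exact h0
    obtain ⟨y, hyC, Q, R, hPQR, hQpos, hintern⟩ :=
      walk_split (H := H) {v | v ∈ C.support} P hb hlenpos
    have hP' := hP
    rw [hPQR] at hP'
    have hQpath : Q.IsPath := hP'.of_append_left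
    have hRpath : R.IsPath := hP'.of_append_right
    have hay : a ≠ y := by
      intro h'
      subst h'
      have hn := (Walk.isPath_iff_eq_nil (p := Q)).mp hQpath
      rw [hn] at hQpos
      simp at hQpos
    rw [hPQR, Walk.edges_append, List.mem_append] at he
    rcases he with heQ | heR
    · by_cases heC : e ∈ C.edges
      · exact Or.inr ⟨u, C, hC, hh, heC⟩
      · have hC' := hC.rotate ha
        have hsupC' : ∀ {z : V}, z ∈ (C.rotate _ ha).support ↔ z ∈ C.support :=
          fun {z} => mem_support_rotate C hC ha
        have hedgC' : ∀ {f : Sym2 V}, f ∈ (C.rotate _ ha).edges ↔ f ∈ C.edges :=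
          fun {f} => (C.rotate_edges _ ha).mem_iff
        have hQC : ∀ e' ∈ Q.edges, e' ∉ C.edges := by
          intro e' he' hce'
          revert he' hce'
          induction e' using Sym2.ind with
          | _ v w =>
            intro he' hce'
            have hvQ : v ∈ Q.support := Q.fst_mem_support_of_mem_edges he'
            have hwQ : w ∈ Q.support := Q.snd_mem_support_of_mem_edges he'
            have hvC : v ∈ C.support := C.fst_mem_support_of_mem_edges hce'
            have hwC : w ∈ C.support := C.snd_mem_support_of_mem_edges hce'
            have hvw : v ≠ w := (Q.adj_of_mem_edges he').ne
            have hv : v = a ∨ v = y := by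
              by_contra hcon
              push_neg at hcon
              exact hintern v hvQ hcon.1 hcon.2 hvC
            have hw : w = a ∨ w = y := by
              by_contra hcon
              push_neg at hcon
              exact hintern w hwQ hcon.1 hcon.2 hwC
            have hay' : s(v, w) = s(a, y) := by
              rcases hv with rfl | rfl <;> rcases hw with rfl | rfl
              · exact absurd rfl hvw
              · rfl
              · exact Sym2.eq_swap
              · exact absurd rfl hvw
            rw [hay'] at he'
            obtain ⟨hadj, W', hW'⟩ := path_cons_of_edge Q hQpath he'
            have hW'nil : W' = Walk.nil := by
              have h2 := hQpath
              rw [hW'] at h2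
              exact (Walk.isPath_iff_eq_nil (p := W')).mp h2.of_cons
            rw [hW'nil] at hW'
            rw [hW'] at heQ
            simp only [Walk.edges_cons, Walk.edges_nil, List.mem_singleton] at heQ
            apply heC
            rw [heQ, ← hay']
            exact hce'
        have hint' : ∀ v ∈ Q.support, v ≠ a → v ≠ y → v ∉ (C.rotate _ ha).support :=
          fun v hv h1 h2 h3 => hintern v hv h1 h2 (hsupC'.mp h3)
        have hQC' : ∀ e' ∈ Q.edges, e' ∉ (C.rotate _ ha).edges :=
          fun e' he' hc' => hQC e' he' (hedgC'.mp hc')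
        exact ear_lemma (C.rotate _ ha) hC' (hsupC'.mpr hyC) (Ne.symm hay) Q hQpath hQC' hint'
          h (hedgC'.mpr hh) e heQ
    · have hyb : y ≠ b := by
        intro h'
        subst h'
        have hn := (Walk.isPath_iff_eq_nil (p := R)).mp hRpath
        rw [hn] at heR
        simp at heR
      have hRlen : R.length ≤ n := by
        have hl := congrArg Walk.length hPQR
        rw [Walk.length_append] at hl
        omega
      exact ih R hRlen hRpath hyC hb hyb e heR h hh

/-- A cycle minus an edge `s(p,q)` contains a `p`–`q` path through all the other edges. -/
lemma cycle_to_path {p q : V} (D : H.Walk p p) (hD : D.IsCycle) (hf : s(p, q) ∈ D.edges) :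
    ∃ P : H.Walk p q, P.IsPath ∧ ∀ g ∈ D.edges, g ≠ s(p, q) → g ∈ P.edges := by
  cases D with
  | nil => simp at hf
  | @cons _ c _ h₀ D₁ =>
    have hD₁ : D₁.IsPath := Walk.IsPath.mk' (by
      have := hD.support_nodup
      rwa [Walk.support_cons, List.tail_cons] at this)
    rw [Walk.edges_cons, List.mem_cons] at hf
    by_cases hcq : s(p, c) = s(p, q)
    · have hcq' : c = q := by
        rcases Sym2.eq_iff.mp hcq with ⟨_, h2⟩ | ⟨h1, h2⟩
        · exact h2
        · exact absurd h2.symm h₀.ne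
      subst hcq'
      refine ⟨D₁.reverse, hD₁.reverse, ?_⟩
      intro g hg hgne
      rw [Walk.edges_cons, List.mem_cons] at hg
      rcases hg with rfl | hg
      · exact absurd hcq hgne
      · rwa [Walk.edges_reverse, List.mem_reverse]
    · have hf' : s(p, q) ∈ D₁.edges := by
        rcases hf with h | h
        · exact absurd h.symm hcq
        · exact h
      have hrev : s(p, q) ∈ D₁.reverse.edges := by
        rwa [Walk.edges_reverse, List.mem_reverse]
      have hD₁rev : D₁.reverse.IsPath := hD₁.reverse
      obtain ⟨hpq, W', hW'⟩ := path_cons_of_edge D₁.reverse hD₁rev hrev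
      have hconsPath : (Walk.cons hpq W').IsPath := by rwa [hW'] at hD₁rev
      have hW'path : W'.IsPath := hconsPath.of_cons
      have hpW' : p ∉ W'.support := by
        have hnd := hconsPath.support_nodup
        rw [Walk.support_cons] at hnd
        exact (List.nodup_cons.mp hnd).1
      refine ⟨Walk.cons h₀ W'.reverse, ?_, ?_⟩
      · refine hW'path.reverse.cons ?_
        rwa [Walk.support_reverse, List.mem_reverse]
      · intro g hg hgne
        rw [Walk.edges_cons, List.mem_cons] at hg ⊢
        rcases hg with rfl | hg
        · exact Or.inl rfl
        · right
          have hgrev : g ∈ D₁.reverse.edges := by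
            rwa [Walk.edges_reverse, List.mem_reverse]
          rw [hW', Walk.edges_cons, List.mem_cons] at hgrev
          rcases hgrev with h | h
          · exact absurd h hgne
          · rwa [Walk.edges_reverse, List.mem_reverse]

lemma SameBlock.trans' {e f g : Sym2 V} (h1 : SameBlock H e f) (h2 : SameBlock H f g) :
    SameBlock H e g := by
  rcases h1 with rfl | ⟨u, C1, hC1, heC1, hfC1⟩
  · exact h2
  rcases h2 with rfl | ⟨w, C2, hC2, hfC2, hgC2⟩
  · exact Or.inr ⟨u, C1, hC1, heC1, hfC1⟩
  by_cases hgC1 : g ∈ C1.edges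
  · exact Or.inr ⟨u, C1, hC1, heC1, hgC1⟩
  revert hfC1 hfC2
  induction f using Sym2.ind with
  | _ p q =>
    intro hfC1 hfC2
    have hpq : p ≠ q := (C1.adj_of_mem_edges hfC1).ne
    have hpC1 : p ∈ C1.support := C1.fst_mem_support_of_mem_edges hfC1
    have hqC1 : q ∈ C1.support := C1.snd_mem_support_of_mem_edges hfC1
    have hpC2 : p ∈ C2.support := C2.fst_mem_support_of_mem_edges hfC2
    have hDc : (C2.rotate _ hpC2).IsCycle := hC2.rotate hpC2
    have hfD : s(p, q) ∈ (C2.rotate _ hpC2).edges := (C2.rotate_edges _ hpC2).mem_iff.mpr hfC2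
    have hgD : g ∈ (C2.rotate _ hpC2).edges := (C2.rotate_edges _ hpC2).mem_iff.mpr hgC2
    obtain ⟨P, hPpath, hPall⟩ := cycle_to_path (C2.rotate _ hpC2) hDc hfD
    have hgf : g ≠ s(p, q) := fun h => hgC1 (by rw [h]; exact hfC1)
    have hgP : g ∈ P.edges := hPall g hgD hgf
    exact key_lemma C1 hC1 P.length P le_rfl hPpath hpC1 hqC1 hpq g hgP e heC1

lemma mem_support_of_mem_edge {a : V} {e : Sym2 V} {x y : V} (p : H.Walk x y)
    (he : e ∈ p.edges) (ha : a ∈ e) : a ∈ p.support := by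
  revert he ha
  induction e using Sym2.ind with
  | _ v w =>
    intro he ha
    rcases Sym2.mem_iff.mp ha with rfl | rfl
    · exact p.fst_mem_support_of_mem_edges he
    · exact p.snd_mem_support_of_mem_edges he

/-- If `f` and `g` are in a common block, `a ∈ f`, `b ∈ g`, `a ≠ b`, then every edge
of an `a`–`b` path is in the same block as `f`. -/
lemma path_absorb {f g : Sym2 V} {a b : V} (hf : f ∈ H.edgeSet) (hfg : SameBlock H f g)
    (ha : a ∈ f) (hb : b ∈ g) (hab : a ≠ b) (P : H.Walk a b) (hP : P.IsPath) :
    ∀ e ∈ P.edges, SameBlock H f e := by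
  intro e he
  rcases hfg with rfl | ⟨u, C, hC, hfC, hgC⟩
  · have hfab : f = s(a, b) := by
      revert hf ha hb
      induction f using Sym2.ind with
      | _ v w =>
        intro hf ha hb
        rcases Sym2.mem_iff.mp ha with rfl | rfl <;> rcases Sym2.mem_iff.mp hb with rfl | rfl
        · exact absurd rfl hab
        · rfl
        · exact Sym2.eq_swap
        · exact absurd rfl hab
    by_cases hfP : s(a, b) ∈ P.edges
    · obtain ⟨hadj, W', hW'⟩ := path_cons_of_edge P hP hfP
      have hW'nil : W' = Walk.nil := by
        have h2 := hP
        rw [hW'] at h2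
        exact (Walk.isPath_iff_eq_nil (p := W')).mp h2.of_cons
      rw [hW'nil] at hW'
      rw [hW'] at he
      simp only [Walk.edges_cons, Walk.edges_nil, List.mem_singleton] at he
      rw [hfab, he]
      exact Or.inl rfl
    · have hadj : H.Adj b a := by
        rw [hfab] at hf
        exact (H.mem_edgeSet.mp hf).symm
      have hcyc : (P.append (Walk.cons hadj Walk.nil)).IsCycle := by
        apply glue_cycle (Ne.symm hab) P hP (Walk.cons hadj Walk.nil)
        · exact Walk.IsPath.mk' (by simp [Ne.symm hab])
        · intro e' he' hce'
          simp only [Walk.edges_cons, Walk.edges_nil, List.mem_singleton] at hce'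
          rw [hce'] at he'
          exact hfP (by rwa [Sym2.eq_swap] at he')
        · intro v hv hvb hvB
          rw [Walk.support_cons, Walk.support_nil, List.mem_cons, List.mem_singleton] at hvB
          rcases hvB with rfl | rfl
          · exact hvb rfl
          · have hnd := hP.support_nodup
            rw [P.support_eq_cons] at hnd
            exact (List.nodup_cons.mp hnd).1 hv
      refine Or.inr ⟨a, P.append (Walk.cons hadj Walk.nil), hcyc, ?_, ?_⟩
      · rw [Walk.edges_append, List.mem_append]
        right
        simp only [Walk.edges_cons, Walk.edges_nil, List.mem_singleton]
        rw [hfab]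
        exact Sym2.eq_swap
      · rw [Walk.edges_append, List.mem_append]
        exact Or.inl he
  · have haC : a ∈ C.support := mem_support_of_mem_edge C hfC ha
    have hbC : b ∈ C.support := mem_support_of_mem_edge C hgC hb
    exact key_lemma C hC P.length P le_rfl hP haC hbC hab e he f hfC

end Aux

section App

variable {V : Type*}

open SimpleGraph.Walk

/-- A path inside a branch set avoiding `X`, in the deleted graph. -/
lemma branch_path {G : SimpleGraph V} {B : Set V} (hconn : (G.induce B).Connected)
    {X : Set V} (hBX : Disjoint B X) {x y : V} (hx : x ∈ B) (hy : y ∈ B) :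
    ∃ P : (G.deleteSet X).Walk x y, P.IsPath ∧ ∀ v ∈ P.support, v ∈ B := by
  classical
  let φ : G.induce B →g G.deleteSet X :=
    { toFun := Subtype.val
      map_rel' := by
        intro u v huv
        exact (show G.Adj u v ∧ (u : V) ∉ X ∧ (v : V) ∉ X from
          ⟨huv, Set.disjoint_left.mp hBX u.2, Set.disjoint_left.mp hBX v.2⟩) }
  obtain ⟨w⟩ := hconn.preconnected ⟨x, hx⟩ ⟨y, hy⟩
  refine ⟨(w.map φ).bypass, (w.map φ).bypass_isPath, ?_⟩
  intro v hv
  have hv' := (w.map φ).support_bypass_subset hv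
  rw [Walk.support_map] at hv'
  obtain ⟨u, _, rfl⟩ := List.mem_map.mp hv'
  exact u.2

lemma append_path' {H : SimpleGraph V} {a b c : V} (P : H.Walk a b) (Q : H.Walk b c)
    (hP : P.IsPath) (hQ : Q.IsPath) (hmeet : ∀ v, v ∈ P.support → v ∈ Q.support → v = b) :
    (P.append Q).IsPath := by
  refine Walk.IsPath.mk' ?_
  rw [Walk.support_append]
  refine List.Nodup.append hP.support_nodup ?_ ?_
  · have hnd := hQ.support_nodup
    rw [Q.support_eq_cons] at hnd
    exact hnd.of_cons
  · intro v hvP hvQt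
    have hvb : v = b := hmeet v hvP (List.mem_of_mem_tail hvQt)
    subst hvb
    have hnd := hQ.support_nodup
    rw [Q.support_eq_cons] at hnd
    exact (List.nodup_cons.mp hnd).1 hvQt

lemma two_avoided {G : SimpleGraph V} {t : ℕ} (M : KtModel G t) (X : Finset V)
    (hX : X.card + 2 ≤ t) :
    ∃ i j : Fin t, i ≠ j ∧ Disjoint (M.branch i) (↑X : Set V) ∧
      Disjoint (M.branch j) (↑X : Set V) := by
  classical
  set S : Finset (Fin t) :=
    Finset.univ.filter (fun i => ¬ Disjoint (M.branch i) (↑X : Set V)) with hS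
  obtain ⟨v₀, _⟩ := M.nonempty ⟨0, by omega⟩
  have hchoose : ∀ i ∈ S, ∃ v, v ∈ M.branch i ∧ v ∈ (↑X : Set V) := by
    intro i hiS
    rw [hS, Finset.mem_filter] at hiS
    exact Set.not_disjoint_iff.mp hiS.2
  choose fv hfv using hchoose
  have hScard : S.card ≤ X.card := by
    apply Finset.card_le_card_of_injOn
      (fun i => if h : i ∈ S then fv i h else v₀)
    · intro i hi
      simp only [dif_pos (Finset.mem_coe.mp hi)]
      exact (hfv i hi).2
    · intro i hi i' hi' heq
      simp only [Finset.mem_coe] at hi hi'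
      simp only [dif_pos hi, dif_pos hi'] at heq
      by_contra hne
      have h1 := (hfv i hi).1
      have h2 := (hfv i' hi').1
      rw [heq] at h1
      exact Set.disjoint_left.mp (M.disjoint i i' hne) h1 h2
  have hcompl : 1 < Sᶜ.card := by
    have h1 : Sᶜ.card = t - S.card := by
      rw [Finset.card_compl, Fintype.card_fin]
    omega
  obtain ⟨i, hi, j, hj, hij⟩ := Finset.one_lt_card.mp hcompl
  rw [Finset.mem_compl, hS, Finset.mem_filter] at hi hj
  push_neg at hi hj
  exact ⟨i, j, hij, hi (Finset.mem_univ i), hj (Finset.mem_univ j)⟩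

end App

/-- if `M` is a `K t` model in `G` and `|X| ≤ t - 2`, then there is a unique
block of `G - X` intersecting every branch set of `M` avoided by `X`. -/
theorem stmt3 {V : Type*} (G : SimpleGraph V) (t : ℕ) (M : KtModel G t)
    (X : Finset V) (hX : X.card + 2 ≤ t) :
    ∃ e₀ ∈ (G.deleteSet ↑X).edgeSet,
      (∀ i, Disjoint (M.branch i) (↑X : Set V) →
        BlockMeets (G.deleteSet ↑X) e₀ (M.branch i)) ∧
      ∀ e₁ ∈ (G.deleteSet ↑X).edgeSet,
        (∀ i, Disjoint (M.branch i) (↑X : Set V) →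
          BlockMeets (G.deleteSet ↑X) e₁ (M.branch i)) →
        SameBlock (G.deleteSet ↑X) e₀ e₁ := by
  classical
  obtain ⟨i, j, hij, hi, hj⟩ := two_avoided M X hX
  obtain ⟨hx1, hy1, hadjG⟩ := M.me_spec i j hij
  set x := (M.me i j hij).1 with hxdef
  set y := (M.me i j hij).2 with hydef
  have hadjH : (G.deleteSet ↑X).Adj x y :=
    (show G.Adj x y ∧ x ∉ (↑X : Set V) ∧ y ∉ (↑X : Set V) from
      ⟨hadjG, Set.disjoint_left.mp hi hx1, Set.disjoint_left.mp hj hy1⟩)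
  have hxy : x ≠ y := fun h => Set.disjoint_left.mp (M.disjoint i j hij) hx1 (h ▸ hy1)
  refine ⟨s(x, y), (SimpleGraph.mem_edgeSet _).mpr hadjH, ?_, ?_⟩
  · -- existence
    intro k hk
    by_cases hki : k = i
    · subst hki
      exact ⟨s(x, y), (SimpleGraph.mem_edgeSet _).mpr hadjH, SameBlock.rfl', x,
        Sym2.mem_mk_left x y, hx1⟩
    by_cases hkj : k = j
    · subst hkj
      exact ⟨s(x, y), (SimpleGraph.mem_edgeSet _).mpr hadjH, SameBlock.rfl', y,
        Sym2.mem_mk_right x y, hy1⟩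
    have hik : i ≠ k := Ne.symm hki
    have hkj' : k ≠ j := hkj
    obtain ⟨hm11, hm12, hm1adj⟩ := M.me_spec i k hik
    obtain ⟨hm21, hm22, hm2adj⟩ := M.me_spec k j hkj'
    set m1 := M.me i k hik with hm1def
    set m2 := M.me k j hkj' with hm2def
    have ha1 : (G.deleteSet ↑X).Adj m1.1 m1.2 :=
      (show G.Adj m1.1 m1.2 ∧ m1.1 ∉ (↑X : Set V) ∧ m1.2 ∉ (↑X : Set V) from
        ⟨hm1adj, Set.disjoint_left.mp hi hm11, Set.disjoint_left.mp hk hm12⟩)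
    have ha2 : (G.deleteSet ↑X).Adj m2.1 m2.2 :=
      (show G.Adj m2.1 m2.2 ∧ m2.1 ∉ (↑X : Set V) ∧ m2.2 ∉ (↑X : Set V) from
        ⟨hm2adj, Set.disjoint_left.mp hk hm21, Set.disjoint_left.mp hj hm22⟩)
    obtain ⟨P₁, hP₁, hP₁s⟩ := branch_path (M.connected i) hi hx1 hm11
    obtain ⟨P₂, hP₂, hP₂s⟩ := branch_path (M.connected k) hk hm12 hm21
    obtain ⟨P₃, hP₃, hP₃s⟩ := branch_path (M.connected j) hj hm22 hy1
    -- W3 : m2.1 → y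
    have hW3 : (Walk.cons ha2 P₃).IsPath := by
      refine hP₃.cons ?_
      intro hmem
      exact Set.disjoint_left.mp (M.disjoint k j hkj') hm21 (hP₃s _ hmem)
    have hW3s : ∀ v ∈ (Walk.cons ha2 P₃).support, v = m2.1 ∨ v ∈ M.branch j := by
      intro v hv
      rw [Walk.support_cons, List.mem_cons] at hv
      rcases hv with rfl | hv
      · exact Or.inl rfl
      · exact Or.inr (hP₃s _ hv)
    -- W2 : m1.2 → y
    have hW2 : (P₂.append (Walk.cons ha2 P₃)).IsPath := by
      refine append_path' _ _ hP₂ hW3 ?_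
      intro v hvP hvW
      rcases hW3s v hvW with h | h
      · exact h
      · exact absurd h (Set.disjoint_left.mp (M.disjoint k j hkj') (hP₂s _ hvP))
    have hW2s : ∀ v ∈ (P₂.append (Walk.cons ha2 P₃)).support,
        v ∈ M.branch k ∨ v ∈ M.branch j := by
      intro v hv
      rw [Walk.mem_support_append_iff] at hv
      rcases hv with hv | hv
      · exact Or.inl (hP₂s _ hv)
      · rcases hW3s v hv with rfl | hv
        · exact Or.inl hm21
        · exact Or.inr hv
    -- W1 : m1.1 → y
    have hW1 : (Walk.cons ha1 (P₂.append (Walk.cons ha2 P₃))).IsPath := by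
      refine hW2.cons ?_
      intro hmem
      rcases hW2s _ hmem with h | h
      · exact Set.disjoint_left.mp (M.disjoint i k hik) hm11 h
      · exact Set.disjoint_left.mp (M.disjoint i j hij) hm11 h
    have hW1s : ∀ v ∈ (Walk.cons ha1 (P₂.append (Walk.cons ha2 P₃))).support,
        v = m1.1 ∨ v ∈ M.branch k ∨ v ∈ M.branch j := by
      intro v hv
      rw [Walk.support_cons, List.mem_cons] at hv
      rcases hv with rfl | hv
      · exact Or.inl rfl
      · exact Or.inr (hW2s v hv)
    -- W : x → y
    have hW : (P₁.append (Walk.cons ha1 (P₂.append (Walk.cons ha2 P₃)))).IsPath := by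
      refine append_path' _ _ hP₁ hW1 ?_
      intro v hvP hvW
      rcases hW1s v hvW with h | h | h
      · exact h
      · exact absurd h (Set.disjoint_left.mp (M.disjoint i k hik) (hP₁s _ hvP))
      · exact absurd h (Set.disjoint_left.mp (M.disjoint i j hij) (hP₁s _ hvP))
    have hmem : s(m1.1, m1.2) ∈
        (P₁.append (Walk.cons ha1 (P₂.append (Walk.cons ha2 P₃)))).edges := by
      rw [Walk.edges_append, List.mem_append]
      right
      rw [Walk.edges_cons]
      exact List.mem_cons_self
    have hsb := path_absorb ((SimpleGraph.mem_edgeSet _).mpr hadjH) SameBlock.rfl'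
      (Sym2.mem_mk_left x y) (Sym2.mem_mk_right x y) hxy _ hW s(m1.1, m1.2) hmem
    exact ⟨s(m1.1, m1.2), (SimpleGraph.mem_edgeSet _).mpr ha1, hsb, m1.2,
      Sym2.mem_mk_right _ _, hm12⟩
  · -- uniqueness
    intro e₁ he₁ hprop
    obtain ⟨f₁, hf₁E, hf₁sb, a, haf, haB⟩ := hprop i hi
    obtain ⟨f₂, hf₂E, hf₂sb, b, hbf, hbB⟩ := hprop j hj
    have hab : a ≠ b := fun h => Set.disjoint_left.mp (M.disjoint i j hij) haB (h ▸ hbB)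
    have hfg : SameBlock (G.deleteSet ↑X) f₁ f₂ := SameBlock.trans' (SameBlock.symm' hf₁sb) hf₂sb
    obtain ⟨P₁, hP₁, hP₁s⟩ := branch_path (M.connected i) hi haB hx1
    obtain ⟨P₂, hP₂, hP₂s⟩ := branch_path (M.connected j) hj hy1 hbB
    have hW2 : (Walk.cons hadjH P₂).IsPath := by
      refine hP₂.cons ?_
      intro hmem
      exact Set.disjoint_left.mp (M.disjoint i j hij) hx1 (hP₂s _ hmem)
    have hW2s : ∀ v ∈ (Walk.cons hadjH P₂).support, v = x ∨ v ∈ M.branch j := by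
      intro v hv
      rw [Walk.support_cons, List.mem_cons] at hv
      rcases hv with rfl | hv
      · exact Or.inl rfl
      · exact Or.inr (hP₂s _ hv)
    have hW : (P₁.append (Walk.cons hadjH P₂)).IsPath := by
      refine append_path' _ _ hP₁ hW2 ?_
      intro v hvP hvW
      rcases hW2s v hvW with h | h
      · exact h
      · exact absurd h (Set.disjoint_left.mp (M.disjoint i j hij) (hP₁s _ hvP))
    have he₀ : s(x, y) ∈ (P₁.append (Walk.cons hadjH P₂)).edges := by
      rw [Walk.edges_append, List.mem_append]
      right
      rw [Walk.edges_cons]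
      exact List.mem_cons_self
    have h1 : SameBlock (G.deleteSet ↑X) f₁ s(x, y) :=
      path_absorb hf₁E hfg haf hbf hab _ hW s(x, y) he₀
    exact SameBlock.trans' (SameBlock.symm' h1) (SameBlock.symm' hf₁sb)
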